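/- Let b ∈ ℝ with b ≠ 0, and let q satisfy either 1 < q ≤ 2, or 0 < q ≤ 1 together with (2/(2−q))·(2(1−q))^((1−q)/(2−q))·q^(1/(2−q)) > 1. Then b/2 is a global minimizer of F(|b|/2, q, b); that is, h(ω = |b|/2, q; b) = b/2. -/

import Mathlib

/-- The scalar objective `F(ω, q, b)(β) = (1/2)(b − β)² + (ω^(2−q)/q)·|β|^q`,
with real-exponent powers (`rpow`). -/
noncomputable def F (ω q b β : ℝ) : ℝ :=
  (1 / 2) * (b - β) ^ 2 + (ω ^ (2 - q) / q) * |β| ^ q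

/-- Monotonicity of `(x^p - 1)/p` in `p`, via Bernoulli's inequality. -/
lemma rpow_diff_div_mono {x p r : ℝ} (hx : 0 ≤ x) (hp : 0 < p) (hpr : p ≤ r) :
    (x ^ p - 1) / p ≤ (x ^ r - 1) / r := by
  have hr : 0 < r := hp.trans_le hpr
  rcases eq_or_lt_of_le hx with h0 | h0
  · rw [← h0, Real.zero_rpow hp.ne', Real.zero_rpow hr.ne']
    rw [div_le_div_iff₀ hp hr]; nlinarith
  · set y := x ^ p with hy
    have hy0 : 0 < y := Real.rpow_pos_of_pos h0 p
    have hexp : x ^ r = y ^ (r / p) := by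
      rw [hy, ← Real.rpow_mul hx]
      congr 1
      field_simp
    have hbern : 1 + (r / p) * (y - 1) ≤ (1 + (y - 1)) ^ (r / p) := by
      apply one_add_mul_self_le_rpow_one_add (by linarith) ((one_le_div hp).2 hpr)
    rw [show 1 + (y - 1) = y by ring] at hbern
    rw [hexp, div_le_div_iff₀ hp hr]
    have h2 : r * (y - 1) ≤ p * (y ^ (r / p)) - p := by
      have := mul_le_mul_of_nonneg_left hbern hp.le
      have hcancel : p * (r / p) = r := by field_simp
      nlinarith
    nlinarith

/-- The core scalar inequality for `q = 2/3`. -/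
lemma core_two_thirds {x : ℝ} (hx : 0 ≤ x) :
    0 ≤ (1 / 2) * (2 - x) ^ 2 - 1 / 2 + (3 / 2) * (x ^ (2/3 : ℝ) - 1) := by
  set t := x ^ (1/3 : ℝ) with htdef
  have ht : 0 ≤ t := Real.rpow_nonneg hx _
  have h3 : t ^ 3 = x := by
    rw [htdef, ← Real.rpow_natCast (x ^ (1/3 : ℝ)) 3, ← Real.rpow_mul hx]
    norm_num
  have h2 : t ^ 2 = x ^ (2/3 : ℝ) := by
    rw [htdef, ← Real.rpow_natCast (x ^ (1/3 : ℝ)) 2, ← Real.rpow_mul hx]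
    norm_num
  rw [← h2, ← h3]
  nlinarith [mul_nonneg (mul_nonneg (sq_nonneg t) (sq_nonneg (t - 1)))
      (show (0:ℝ) ≤ t ^ 2 + 2 * t + 3 by nlinarith [sq_nonneg (t + 1)]),
    sq_nonneg t, sq_nonneg (t - 1)]

/-- The core scalar inequality for `2/3 ≤ q ≤ 2`. -/
lemma core_ineq {x q : ℝ} (hx : 0 ≤ x) (hq : 2/3 ≤ q) (hq2 : q ≤ 2) :
    1 / 2 + 1 / q ≤ (1 / 2) * (2 - x) ^ 2 + x ^ q / q := by
  have hq0 : (0:ℝ) < q := by linarith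
  have hmono := rpow_diff_div_mono (p := 2/3) (r := q) hx (by norm_num) hq
  have hcore := core_two_thirds hx
  have h1 : (x ^ (2/3 : ℝ) - 1) / (2/3) = (3/2) * (x ^ (2/3 : ℝ) - 1) := by ring
  rw [h1] at hmono
  have h2 : (x ^ q - 1) / q = x ^ q / q - 1 / q := by ring
  rw [h2] at hmono
  linarith

/-- Under the side condition, `q > 2/3`. -/
lemma q_gt_two_thirds {q : ℝ} (hq0 : 0 < q) (hq1 : q ≤ 1)
    (hC : 1 < (2 / (2 - q)) * (2 * (1 - q)) ^ ((1 - q) / (2 - q)) * q ^ (1 / (2 - q))) :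
    2/3 < q := by
  by_contra h
  push_neg at h
  have h2q : (0:ℝ) < 2 - q := by linarith
  have hw₁ : (0:ℝ) ≤ (1 - q) / (2 - q) := div_nonneg (by linarith) h2q.le
  have hw₂ : (0:ℝ) ≤ 1 / (2 - q) := by positivity
  have hwsum : (1 - q) / (2 - q) + 1 / (2 - q) = 1 := by
    rw [← add_div, div_eq_one_iff_eq h2q.ne']; ring
  have hgm := Real.geom_mean_le_arith_mean2_weighted hw₁ hw₂
    (by linarith : (0:ℝ) ≤ 2 * (1 - q)) hq0.le hwsum
  have hfac : (0:ℝ) < 2 / (2 - q) := by positivity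
  have hstep : (2 / (2 - q)) * ((2 * (1 - q)) ^ ((1 - q) / (2 - q)) * q ^ (1 / (2 - q)))
      ≤ (2 / (2 - q)) * ((1 - q) / (2 - q) * (2 * (1 - q)) + 1 / (2 - q) * q) :=
    mul_le_mul_of_nonneg_left hgm hfac.le
  have hrhs : (2 / (2 - q)) * ((1 - q) / (2 - q) * (2 * (1 - q)) + 1 / (2 - q) * q) ≤ 1 := by
    have hexp : (1 - q) / (2 - q) * (2 * (1 - q)) + 1 / (2 - q) * q
        = (2 * (1 - q) ^ 2 + q) / (2 - q) := by field_simp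
    rw [hexp, div_mul_div_comm, div_le_one (by positivity)]
    nlinarith
  nlinarith [hC, hstep, hrhs]

theorem h_at_half_b (b q : ℝ) (hb : b ≠ 0) (hq0 : 0 < q) (hq2 : q ≤ 2)
    (hcase : 1 < q ∨
      (q ≤ 1 ∧ 1 < (2 / (2 - q)) * (2 * (1 - q)) ^ ((1 - q) / (2 - q)) * q ^ (1 / (2 - q)))) :
    ∀ β : ℝ, F (|b| / 2) q b (b / 2) ≤ F (|b| / 2) q b β := by
  have hq23 : 2/3 ≤ q := by
    rcases hcase with h | ⟨h1, hC⟩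
    · linarith
    · exact (q_gt_two_thirds hq0 h1 hC).le
  intro β
  set ω : ℝ := |b| / 2 with hωdef
  have hω : 0 < ω := by
    have : 0 < |b| := abs_pos.2 hb
    rw [hωdef]; linarith
  have hbabs : |b| = 2 * ω := by rw [hωdef]; ring
  have hb2 : b ^ 2 = 4 * ω ^ 2 := by
    have := sq_abs b
    rw [hbabs] at this; nlinarith
  -- LHS value
  have habs_half : |b / 2| = ω := by
    rw [abs_div, hbabs]; norm_num
  have hωq : 0 < ω ^ q := Real.rpow_pos_of_pos hω q
  have hpow : ω ^ (2 - q) = ω ^ 2 / ω ^ q := by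
    rw [Real.rpow_sub hω, Real.rpow_two]
  have hLHS : F ω q b (b / 2) = ω ^ 2 / 2 + ω ^ 2 / q := by
    rw [F, habs_half, hpow]
    have hcomb : ω ^ 2 / ω ^ q / q * ω ^ q = ω ^ 2 / q := by
      field_simp
    rw [hcomb]
    nlinarith [hb2]
  rw [hLHS]
  -- RHS lower bound
  set s : ℝ := |β| with hsdef
  have hs : 0 ≤ s := abs_nonneg β
  have hsq : (2 * ω - s) ^ 2 ≤ (b - β) ^ 2 := by
    have h1 : |b| - |β| ≤ |b - β| := abs_sub_abs_le_abs_sub b β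
    have h2 : |β| - |b| ≤ |β - b| := abs_sub_abs_le_abs_sub β b
    have h3 : |β - b| = |b - β| := abs_sub_comm β b
    have h4 : |b - β| ^ 2 = (b - β) ^ 2 := sq_abs _
    nlinarith [abs_nonneg (b - β)]
  -- core inequality scaled
  have hcore := core_ineq (x := s / ω) (by positivity) hq23 hq2
  have hdiv : (s / ω) ^ q = s ^ q / ω ^ q := Real.div_rpow hs hω.le q
  rw [hdiv] at hcore
  have hscaled := mul_le_mul_of_nonneg_left hcore (by positivity : (0:ℝ) ≤ ω ^ 2)
  have hleft : ω ^ 2 * (1 / 2 + 1 / q) = ω ^ 2 / 2 + ω ^ 2 / q := by ring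
  have hright : ω ^ 2 * ((1 / 2) * (2 - s / ω) ^ 2 + s ^ q / ω ^ q / q)
      = (1 / 2) * (2 * ω - s) ^ 2 + (ω ^ 2 / ω ^ q / q) * s ^ q := by
    field_simp
  rw [hleft, hright] at hscaled
  rw [F, hpow, ← hsdef]
  calc ω ^ 2 / 2 + ω ^ 2 / q
      ≤ (1 / 2) * (2 * ω - s) ^ 2 + (ω ^ 2 / ω ^ q / q) * s ^ q := hscaled
    _ ≤ (1 / 2) * (b - β) ^ 2 + (ω ^ 2 / ω ^ q / q) * s ^ q := by
        have : 0 ≤ s ^ q := Real.rpow_nonneg hs q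
        nlinarith [hsq]
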